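/- arXiv:2007.02479 — 2 statements merged into one kernel-verified Lean document; each statement's English description precedes it below -/
import Mathlib

section
/- The composition μ^q_{k,t} = μ^♯_{k,t} ∘ μ'_{k,t} of the conjugation by the coefficient-quantum-dilogarithm Ψ_{q_k}((t^{[c_k]_+}/t^{[−c_k]_+})X̃_k) with the monomial change-of-basis map satisfies, in cluster coordinates: μ^q_{k,t}(X̃_{i;𝒢'}) = X̃_{k;𝒢}^{−1} if i = k, and X̃_{i;𝒢}·(∏_{ℓ=1}^{|ε_{ik}|}(t^{[sgn(ε_{ik})c_k]_+} + t^{[−sgn(ε_{ik})c_k]_+} q_k^{2ℓ−1} X̃_{k;𝒢}^{−sgn(ε_{ik})}))^{−sgn(ε_{ik})} if i ≠ k. -/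
section aux
variable {B : Type*} [Ring B] [TopologicalSpace B] [IsTopologicalRing B]

lemma qdilog_shift_step (q : B) (hq : ∀ b : B, Commute q b)
    (c : ℕ → B)
    (hcrec : ∀ n : ℕ, c (n + 1) * (q ^ (2 * (n + 1)) - 1) = q * c n)
    (hcc : ∀ (n : ℕ) (b : B), Commute (c n) b)
    (x S : B) (h : HasSum (fun n : ℕ => c n * x ^ n) S) :
    HasSum (fun n : ℕ => c n * (q ^ 2 * x) ^ n) ((1 + q * x) * S) := by
  have h1 : HasSum (fun n : ℕ => q * x * (c n * x ^ n)) (q * x * S) := h.mul_left _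
  set g : ℕ → B := fun n => Nat.rec 0 (fun m _ => q * x * (c m * x ^ m)) n with hg
  have hg0 : g 0 = 0 := rfl
  have hgs : ∀ n, g (n + 1) = q * x * (c n * x ^ n) := fun n => rfl
  have h2 : HasSum g (q * x * S) := by
    have := (hasSum_nat_add_iff (f := g) 1).mp (by simpa [hgs] using h1)
    simpa [hg0] using this
  have h3 := h.add h2
  have hterm : ∀ n, c n * (q ^ 2 * x) ^ n = c n * x ^ n + g n := by
    intro n
    cases n with
    | zero => simp [hg0]
    | succ n =>
      have hqx : (q ^ 2 * x) ^ (n + 1) = q ^ (2 * (n + 1)) * x ^ (n + 1) := by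
        rw [((hq x).pow_left 2).mul_pow, ← pow_mul]
      have hc : c (n + 1) * q ^ (2 * (n + 1)) = c (n + 1) + q * c n := by
        have := hcrec n
        rw [mul_sub, mul_one, sub_eq_iff_eq_add] at this
        rw [this, add_comm]
      have hxc : x * c n = c n * x := ((hcc n x).symm).eq
      have hgsn : g (n + 1) = q * c n * x ^ (n + 1) := by
        rw [hgs n, mul_assoc q x, ← mul_assoc x, hxc, mul_assoc, ← pow_succ', ← mul_assoc]
      rw [hqx, ← mul_assoc, hc, add_mul, hgsn]
  have : (fun n : ℕ => c n * x ^ n + g n) = fun n : ℕ => c n * (q ^ 2 * x) ^ n :=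
    funext fun n => (hterm n).symm
  rw [this] at h3
  rw [add_mul, one_mul]
  exact h3

lemma qdilog_shift_iter (q : B) (hq : ∀ b : B, Commute q b)
    (c : ℕ → B)
    (hcrec : ∀ n : ℕ, c (n + 1) * (q ^ (2 * (n + 1)) - 1) = q * c n)
    (hcc : ∀ (n : ℕ) (b : B), Commute (c n) b)
    (x S : B) (h : HasSum (fun n : ℕ => c n * x ^ n) S) (m : ℕ) :
    HasSum (fun n : ℕ => c n * (q ^ (2 * m) * x) ^ n)
      ((((List.range m).map (fun j => 1 + q ^ (2 * j + 1) * x)).prod) * S) := by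
  have hfac : ∀ a b : ℕ, Commute (1 + q ^ a * x) (1 + q ^ b * x) := by
    intro a b
    have hab : Commute (q ^ a * x) (q ^ b * x) :=
      Commute.mul_right (((hq _).pow_left _).symm)
        (Commute.mul_left ((hq x).pow_left _) (Commute.refl x))
    exact Commute.add_left (Commute.one_left _)
      (Commute.add_right (Commute.one_right _) hab)
  induction m with
  | zero => simpa using h
  | succ m ih =>
    have step := qdilog_shift_step q hq c hcrec hcc (q ^ (2 * m) * x) _ ih
    have e1 : q ^ 2 * (q ^ (2 * m) * x) = q ^ (2 * (m + 1)) * x := by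
      rw [← mul_assoc, ← pow_add]; ring_nf
    have e2 : 1 + q * (q ^ (2 * m) * x) = 1 + q ^ (2 * m + 1) * x := by
      rw [← mul_assoc, ← pow_succ']
    rw [e1, e2] at step
    have hcomm : Commute (((List.range m).map (fun j => 1 + q ^ (2 * j + 1) * x)).prod)
        (1 + q ^ (2 * m + 1) * x) := by
      refine (Commute.list_prod_right _ _ ?_).symm
      intro z hz
      obtain ⟨j, _, rfl⟩ := List.mem_map.mp hz
      exact hfac _ _
    rw [← mul_assoc, ← hcomm.eq] at step
    simpa [List.range_succ] using step
end aux

section lists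
variable {M : Type*} [Monoid M]

lemma list_prod_range_rev (f : ℕ → M) (hf : ∀ i j, Commute (f i) (f j)) :
    ∀ m : ℕ, ((List.range m).map (fun ℓ => f (m - 1 - ℓ))).prod
      = ((List.range m).map f).prod := by
  intro m
  induction m with
  | zero => simp
  | succ m ih =>
    have h1 : ((List.range (m + 1)).map (fun ℓ => f (m + 1 - 1 - ℓ))).prod
        = f m * ((List.range m).map (fun ℓ => f (m - 1 - ℓ))).prod := by
      have hfun : ((fun ℓ => f (m + 1 - 1 - ℓ)) ∘ (· + 1)) = fun ℓ => f (m - 1 - ℓ) := by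
        funext ℓ; simp only [Function.comp_apply]; congr 1; omega
      rw [List.range_succ_eq_map]
      simp only [List.map_cons, List.prod_cons, List.map_map, hfun]
      norm_num
    have h2 : Commute (f m) (((List.range m).map f).prod) := by
      refine Commute.list_prod_right _ _ ?_
      intro z hz
      obtain ⟨j, _, rfl⟩ := List.mem_map.mp hz
      exact hf _ _
    rw [h1, ih, h2.eq, List.range_succ]
    simp

lemma list_prod_map_semiconj (g f : ℕ → M) (a : M)
    (h : ∀ j, g j * a = a * f j) :
    ∀ L : List ℕ, ((L.map g).prod) * a = a * ((L.map f).prod) := by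
  intro L
  induction L with
  | nil => simp
  | cons i L ih =>
    simp only [List.map_cons, List.prod_cons, mul_assoc]
    rw [ih, ← mul_assoc, h i, mul_assoc]

lemma list_prod_range_mul (a b : ℕ → M) (h : ∀ i j, Commute (b i) (a j)) :
    ∀ m : ℕ, ((List.range m).map (fun ℓ => a ℓ * b ℓ)).prod
      = ((List.range m).map a).prod * ((List.range m).map b).prod := by
  intro m
  induction m with
  | zero => simp
  | succ m ih =>
    have hba : Commute (((List.range m).map b).prod) (a m) := by
      refine Commute.list_prod_left _ _ ?_
      intro z hz
      obtain ⟨j, _, rfl⟩ := List.mem_map.mp hz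
      exact h _ _
    rw [List.range_succ]
    simp only [List.map_append, List.prod_append, List.map_cons, List.prod_cons,
      List.map_nil, List.prod_nil, mul_one]
    rw [ih, mul_assoc, ← mul_assoc _ (a m), hba.eq, mul_assoc, ← mul_assoc]

lemma list_prod_range_const (z : M) (m : ℕ) :
    ((List.range m).map (fun _ => z)).prod = z ^ m := by
  induction m with
  | zero => simp
  | succ m ih => rw [List.range_succ]; simp [ih, pow_succ]
end lists

section powprod
variable {B : Type*} [Monoid B]

lemma list_prod_range_qpow (q : B) (m : ℕ) :
    ((List.range m).map (fun ℓ => q ^ (2 * ℓ + 1))).prod = q ^ (m * m) := by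
  induction m with
  | zero => simp
  | succ m ih =>
    rw [List.range_succ]
    simp only [List.map_append, List.prod_append, List.map_cons, List.prod_cons,
      List.map_nil, List.prod_nil, mul_one]
    rw [ih, ← pow_add]
    congr 1
    ring
end powprod



/-- The quantum `𝒳`-mutation with coefficients, `μ^q_{k,𝐭} = μ^♯_{k,𝐭} ∘ μ'_{k,𝐭}`, computed
in cluster coordinates.  Here the quantum torus satisfies
`X̃_k X̃_i = q_k^{−2ε_{ik}} X̃_i X̃_k` with central units `q_k = q^{1/d_k}`,
`tp = 𝐭^{[c_k]_+}`, `tm = 𝐭^{[−c_k]_+}`; the coefficient quantum dilogarithm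
`Ψ_{q_k}((tp/tm)·X̃_k) = ∑_n c_n ((tp/tm)X̃_k)^n` (with `c_0 = 1`,
`c_n(q_k^{2n} − 1) = q_k c_{n−1}`, the sum converging in a Hausdorff topological ring) defines
`μ^♯` by conjugation, while `μ'` sends `X̃_{k;𝒢'} ↦ X̃_{k;𝒢}^{−1}` and
`X̃_{i;𝒢'} ↦ 𝐭^{−ε_{ik}[−c_k]_+} q^{−ε̂_{ik}[ε_{ik}]_+} X̃_{i;𝒢} X̃_{k;𝒢}^{[ε_{ik}]_+}`
(the prefactors being `tm^{−ε_{ik}}` and `q_k^{−ε_{ik}[ε_{ik}]_+}`).  The composition gives: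
`μ^q(X̃_{k;𝒢'}) = X̃_{k;𝒢}^{−1}`, and for `i ≠ k`,
`μ^q(X̃_{i;𝒢'}) = X̃_{i;𝒢}·(∏_{ℓ=1}^{|ε_{ik}|}(𝐭^{[sgn(ε)c_k]_+} + 𝐭^{[−sgn(ε)c_k]_+}
q_k^{2ℓ−1} X̃_{k;𝒢}^{−sgn(ε)}))^{−sgn(ε)}`. -/
theorem quantum_X_mutation_with_coefficients {B : Type*} [Ring B] [TopologicalSpace B]
    [IsTopologicalRing B] [T2Space B]
    (qk tp tm : Bˣ)
    (hqk : ∀ b : B, Commute (qk : B) b)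
    (htp : ∀ b : B, Commute (tp : B) b)
    (htm : ∀ b : B, Commute (tm : B) b)
    (ε : ℤ) (Xi : B) (Xk : Bˣ)
    (hrel : (Xk : B) * Xi = ((qk ^ (-(2 * ε)) : Bˣ) : B) * (Xi * (Xk : B)))
    (c : ℕ → B) (hc0 : c 0 = 1)
    (hcrec : ∀ n : ℕ, c (n + 1) * ((qk : B) ^ (2 * (n + 1)) - 1) = (qk : B) * c n)
    (hcc : ∀ (n : ℕ) (b : B), Commute (c n) b)
    (Ψ : Bˣ)
    (hΨ : HasSum (fun n : ℕ => c n * (((tp * tm⁻¹ : Bˣ) : B) * (Xk : B)) ^ n) (Ψ : B))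
    (P : Bˣ)
    (hP : (P : B) = ((List.range ε.natAbs).map (fun ℓ =>
      (if 0 ≤ ε then (tp : B) else (tm : B)) +
        (if 0 ≤ ε then (tm : B) else (tp : B)) * (qk : B) ^ (2 * ℓ + 1) *
          ((Xk ^ (-(Int.sign ε)) : Bˣ) : B))).prod) :
    ((Ψ : B) * ((Xk⁻¹ : Bˣ) : B) * ((Ψ⁻¹ : Bˣ) : B) = ((Xk⁻¹ : Bˣ) : B)) ∧
    ((Ψ : B) * (((tm ^ (-ε) : Bˣ) : B) * ((qk ^ (-(ε * max ε 0)) : Bˣ) : B) *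
        (Xi * ((Xk ^ max ε 0 : Bˣ) : B))) * ((Ψ⁻¹ : Bˣ) : B) =
      Xi * ((P ^ (-(Int.sign ε)) : Bˣ) : B)) := by
  set U : B := ((tp * tm⁻¹ : Bˣ) : B) with hUdef
  set y : B := U * (Xk : B) with hydef
  have hU : ∀ b : B, Commute U b := by
    intro b
    rw [hUdef, Units.val_mul]
    exact (htp b).mul_left ((htm b).units_inv_left)
  have hΨcomm : ∀ b : B, (∀ n : ℕ, Commute b (c n * y ^ n)) → Commute b (Ψ : B) := by
    intro b hb
    have h1 : HasSum (fun n : ℕ => b * (c n * y ^ n)) (b * (Ψ : B)) := hΨ.mul_left b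
    have h2 : HasSum (fun n : ℕ => (c n * y ^ n) * b) ((Ψ : B) * b) := hΨ.mul_right b
    have he : (fun n : ℕ => b * (c n * y ^ n)) = fun n : ℕ => (c n * y ^ n) * b :=
      funext fun n => (hb n).eq
    rw [he] at h1
    exact h1.unique h2
  have hXky : Commute ((Xk : B)) y := ((hU _).symm).mul_right (Commute.refl _)
  have hΨXk : Commute ((Xk : B)) (Ψ : B) :=
    hΨcomm _ (fun n => ((hcc n _).symm).mul_right (hXky.pow_right n))
  refine ⟨?_, ?_⟩
  · have h := (hΨXk.units_inv_left).symm
    rw [h.eq, mul_assoc, Units.mul_inv, mul_one]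
  -- central element movers
  have cU : ∀ a : B, a * U = U * a := fun a => ((hU a).symm).eq
  have cUl : ∀ a b : B, a * (U * b) = U * (a * b) := fun a b => by
    rw [← mul_assoc, cU, mul_assoc]
  have cq : ∀ (e : ℕ) (a : B), a * (qk : B) ^ e = (qk : B) ^ e * a :=
    fun e a => (((hqk a).pow_left e).symm).eq
  have cql : ∀ (e : ℕ) (a b : B), a * ((qk : B) ^ e * b) = (qk : B) ^ e * (a * b) :=
    fun e a b => by rw [← mul_assoc, cq, mul_assoc]
  have ctm : ∀ (e : ℕ) (a : B), a * (tm : B) ^ e = (tm : B) ^ e * a :=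
    fun e a => (((htm a).pow_left e).symm).eq
  have ctml : ∀ (e : ℕ) (a b : B), a * ((tm : B) ^ e * b) = (tm : B) ^ e * (a * b) :=
    fun e a b => by rw [← mul_assoc, ctm, mul_assoc]
  rcases lt_trichotomy ε 0 with hε | hε | hε
  · -- ε < 0
    set m := (-ε).toNat with hmdef
    have hmε : (m : ℤ) = -ε := Int.toNat_of_nonneg (by omega)
    have hsign : Int.sign ε = -1 := Int.sign_eq_neg_one_of_neg hε
    have hnat : ε.natAbs = m := by omega
    have hTm : (tm ^ (-ε) : Bˣ) = tm ^ m := by rw [← hmε, zpow_natCast]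
    have hQc : (qk ^ (-(ε * max ε 0)) : Bˣ) = 1 := by
      rw [max_eq_right hε.le, mul_zero, neg_zero, zpow_zero]
    have hK : (Xk ^ max ε 0 : Bˣ) = 1 := by rw [max_eq_right hε.le, zpow_zero]
    have hPz : (P ^ (-Int.sign ε) : Bˣ) = P := by rw [hsign, neg_neg, zpow_one]
    rw [hTm, hQc, hK, hPz]
    simp only [Units.val_one, mul_one, one_mul]
    have hP' : (P : B) = ((List.range m).map (fun ℓ =>
        (tm : B) + (tp : B) * (qk : B) ^ (2 * ℓ + 1) * (Xk : B))).prod := by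
      rw [hP, hnat]
      simp only [if_neg (not_le.mpr hε), hsign, neg_neg, zpow_one]
    have hzrw : ((qk ^ (-(2 * ε)) : Bˣ) : B) = (qk : B) ^ (2 * m) := by
      rw [show (-(2 * ε)) = ((2 * m : ℕ) : ℤ) by push_cast; omega, zpow_natCast,
        Units.val_pow_eq_pow_val]
    rw [hzrw] at hrel
    have hsemi : SemiconjBy Xi ((qk : B) ^ (2 * m) * y) y := by
      show Xi * ((qk : B) ^ (2 * m) * y) = y * Xi
      rw [hydef, mul_assoc, hrel, cql, cql, cUl]
    set G : B := ((List.range m).map (fun j => 1 + (qk : B) ^ (2 * j + 1) * y)).prod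
      with hGdef
    have iter := qdilog_shift_iter (qk : B) hqk c hcrec hcc y (Ψ : B) hΨ m
    have lemB' : (Ψ : B) * Xi = Xi * (G * (Ψ : B)) := by
      have h1 : HasSum (fun n : ℕ => (c n * y ^ n) * Xi) ((Ψ : B) * Xi) := hΨ.mul_right Xi
      have he : (fun n : ℕ => (c n * y ^ n) * Xi)
          = fun n : ℕ => Xi * (c n * ((qk : B) ^ (2 * m) * y) ^ n) := by
        funext n
        rw [mul_assoc, ← (hsemi.pow_right n).eq, ← mul_assoc, (hcc n Xi).eq, mul_assoc]
      rw [he] at h1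
      exact h1.unique (iter.mul_left Xi)
    have htmU : (tm : B) * U = (tp : B) := by
      rw [hUdef, Units.val_mul, ← mul_assoc, (htm _).eq, mul_assoc, Units.mul_inv, mul_one]
    have hplf : ∀ ℓ : ℕ, (tm : B) + (tp : B) * (qk : B) ^ (2 * ℓ + 1) * (Xk : B)
        = (tm : B) * (1 + (qk : B) ^ (2 * ℓ + 1) * y) := by
      intro ℓ
      rw [mul_add, mul_one, hydef, cql, ← mul_assoc (tm : B) U, htmU, ← cql, ← mul_assoc]
    have hPneg : (P : B) = (tm : B) ^ m * G := by
      rw [hP']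
      have e0 : ((List.range m).map (fun ℓ =>
          (tm : B) + (tp : B) * (qk : B) ^ (2 * ℓ + 1) * (Xk : B))).prod
          = ((List.range m).map (fun ℓ =>
            (tm : B) * (1 + (qk : B) ^ (2 * ℓ + 1) * y))).prod := by
        congr 1
        exact List.map_congr_left (fun ℓ _ => hplf ℓ)
      rw [e0, list_prod_range_mul (fun _ => (tm : B))
        (fun ℓ => 1 + (qk : B) ^ (2 * ℓ + 1) * y) (fun i j => (htm _).symm) m,
        list_prod_range_const]
    rw [Units.val_pow_eq_pow_val, ctml, lemB']
    simp only [mul_assoc]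
    rw [Units.mul_inv, mul_one, ← ctml, ← hPneg]
  · -- ε = 0
    subst hε
    have hrel0 : (Xk : B) * Xi = Xi * (Xk : B) := by
      simpa using hrel
    have hXiΨ : Commute Xi (Ψ : B) := by
      refine hΨcomm Xi ?_
      intro n
      refine ((hcc n Xi).symm).mul_right (Commute.pow_right ?_ n)
      exact ((hU Xi).symm).mul_right hrel0.symm
    simp only [neg_zero, zpow_zero, Units.val_one, one_mul, mul_one, max_self,
      mul_zero, Int.sign_zero]
    rw [← hXiΨ.eq, mul_assoc, Units.mul_inv, mul_one]
  · -- ε > 0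
    set m := ε.toNat with hmdef
    have hmε : (m : ℤ) = ε := Int.toNat_of_nonneg hε.le
    have hsign : Int.sign ε = 1 := Int.sign_eq_one_of_pos hε
    have hnat : ε.natAbs = m := by omega
    have hTm : (tm ^ (-ε) : Bˣ) = (tm ^ m)⁻¹ := by
      rw [← hmε, zpow_neg, zpow_natCast]
    have hQc : (qk ^ (-(ε * max ε 0)) : Bˣ) = (qk ^ (m * m))⁻¹ := by
      have h1 : -(ε * max ε 0) = -((m * m : ℕ) : ℤ) := by
        rw [max_eq_left hε.le, ← hmε]
        push_cast
        ring
      rw [h1, zpow_neg, zpow_natCast]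
    have hK : (Xk ^ max ε 0 : Bˣ) = Xk ^ m := by
      rw [max_eq_left hε.le, ← hmε, zpow_natCast]
    have hPz : (P ^ (-Int.sign ε) : Bˣ) = P⁻¹ := by
      rw [hsign]
      simp
    rw [hTm, hQc, hK, hPz]
    have hP' : (P : B) = ((List.range m).map (fun ℓ =>
        (tp : B) + (tm : B) * (qk : B) ^ (2 * ℓ + 1) * ((Xk⁻¹ : Bˣ) : B))).prod := by
      rw [hP, hnat]
      simp only [if_pos hε.le, hsign]
      norm_num
    -- value-level abbreviations
    have hq2m : ((qk ^ (2 * m) : Bˣ) : B) = (qk : B) ^ (2 * m) :=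
      Units.val_pow_eq_pow_val _ _
    set Qiv : B := (((qk ^ (2 * m))⁻¹ : Bˣ) : B) with hQivdef
    have hQi : ∀ b : B, Commute Qiv b := by
      intro b
      have h1 : Commute ((qk ^ (2 * m) : Bˣ) : B) b := by
        rw [hq2m]; exact (hqk b).pow_left _
      exact h1.units_inv_left
    have cQ : ∀ a : B, a * Qiv = Qiv * a := fun a => ((hQi a).symm).eq
    have cQl : ∀ a b : B, a * (Qiv * b) = Qiv * (a * b) := fun a b => by
      rw [← mul_assoc, cQ, mul_assoc]
    have hzrw : ((qk ^ (-(2 * ε)) : Bˣ) : B) = Qiv := by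
      rw [hQivdef]
      congr 1
      have h1 : -(2 * ε) = -((2 * m : ℕ) : ℤ) := by rw [← hmε]; push_cast; ring
      rw [h1, zpow_neg, zpow_natCast]
    rw [hzrw] at hrel
    have hq2mQi : (qk : B) ^ (2 * m) * Qiv = 1 := by
      rw [← hq2m, hQivdef, Units.mul_inv]
    have hXiXk : Xi * (Xk : B) = (qk : B) ^ (2 * m) * ((Xk : B) * Xi) := by
      rw [hrel, ← mul_assoc, hq2mQi, one_mul]
    have hsemi : SemiconjBy Xi y ((qk : B) ^ (2 * m) * y) := by
      show Xi * y = ((qk : B) ^ (2 * m) * y) * Xi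
      rw [hydef, ← mul_assoc, ← (hU Xi).eq, mul_assoc, hXiXk, cql]
      simp only [mul_assoc]
    set G : B := ((List.range m).map (fun j => 1 + (qk : B) ^ (2 * j + 1) * y)).prod
      with hGdef
    have iter := qdilog_shift_iter (qk : B) hqk c hcrec hcc y (Ψ : B) hΨ m
    have lemB : Xi * (Ψ : B) = G * ((Ψ : B) * Xi) := by
      have h1 : HasSum (fun n : ℕ => Xi * (c n * y ^ n)) (Xi * (Ψ : B)) := hΨ.mul_left Xi
      have he : (fun n : ℕ => Xi * (c n * y ^ n))
          = fun n : ℕ => (c n * ((qk : B) ^ (2 * m) * y) ^ n) * Xi := by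
        funext n
        rw [← mul_assoc, ← (hcc n Xi).eq, mul_assoc, (hsemi.pow_right n).eq, ← mul_assoc]
      rw [he] at h1
      rw [h1.unique (iter.mul_right Xi), mul_assoc]
    set x : B := Qiv * y with hxdef
    have hyXi : y * Xi = Xi * x := by
      rw [hxdef, hydef, mul_assoc, hrel, cQl, ← cUl, cQl]
    have hgf : ∀ j : ℕ, (1 + (qk : B) ^ (2 * j + 1) * y) * Xi
        = Xi * (1 + (qk : B) ^ (2 * j + 1) * x) := by
      intro j
      rw [add_mul, one_mul, mul_add, mul_one, mul_assoc, hyXi, cql]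
    set F : B := ((List.range m).map (fun j => 1 + (qk : B) ^ (2 * j + 1) * x)).prod
      with hFdef
    have lemC : G * Xi = Xi * F :=
      list_prod_map_semiconj _ _ Xi hgf (List.range m)
    -- Ψ commutes with G and P
    have hGy : Commute G y := by
      refine Commute.list_prod_left _ _ ?_
      intro z hz
      obtain ⟨j, _, rfl⟩ := List.mem_map.mp hz
      exact Commute.add_left (Commute.one_left y)
        (Commute.mul_left ((hqk y).pow_left _) (Commute.refl y))
    have hΨG : Commute G (Ψ : B) :=
      hΨcomm G (fun n => ((hcc n G).symm).mul_right (hGy.pow_right n))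
    have hPy : Commute ((P : B)) y := by
      rw [hP']
      refine Commute.list_prod_left _ _ ?_
      intro z hz
      obtain ⟨ℓ, _, rfl⟩ := List.mem_map.mp hz
      refine Commute.add_left (htp y) ?_
      exact Commute.mul_left (Commute.mul_left (htm y) ((hqk y).pow_left _))
        (hXky.units_inv_left)
    have hΨP : Commute ((P : B)) (Ψ : B) :=
      hΨcomm _ (fun n => ((hcc n _).symm).mul_right (hPy.pow_right n))
    -- product identity for P
    set Xv : B := ((Xk⁻¹ : Bˣ) : B) with hXvdef
    have hXvXk : Xv * (Xk : B) = 1 := Units.inv_mul _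
    have htmU : (tm : B) * U = (tp : B) := by
      rw [hUdef, Units.val_mul, ← mul_assoc, (htm _).eq, mul_assoc, Units.mul_inv, mul_one]
    have hx2 : Xv * x = Qiv * U := by
      rw [hxdef, hydef, cQl, cUl, hXvXk, mul_one]
    have hx3 : ∀ e : ℕ, Xv * ((qk : B) ^ e * x) = (qk : B) ^ e * (Qiv * U) := by
      intro e
      rw [cql, hx2]
    have hplf : ∀ ℓ, ℓ < m →
        (tp : B) + (tm : B) * (qk : B) ^ (2 * ℓ + 1) * Xv
        = (tm : B) * ((qk : B) ^ (2 * ℓ + 1) *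
            (Xv * (1 + (qk : B) ^ (2 * (m - 1 - ℓ) + 1) * x))) := by
      intro ℓ hℓ
      have hee : (2 * ℓ + 1) + (2 * (m - 1 - ℓ) + 1) = 2 * m := by omega
      symm
      calc (tm : B) * ((qk : B) ^ (2 * ℓ + 1) *
              (Xv * (1 + (qk : B) ^ (2 * (m - 1 - ℓ) + 1) * x)))
          = (tm : B) * ((qk : B) ^ (2 * ℓ + 1) *
              (Xv + (qk : B) ^ (2 * (m - 1 - ℓ) + 1) * (Qiv * U))) := by
            rw [mul_add, mul_one, hx3]
        _ = (tm : B) * ((qk : B) ^ (2 * ℓ + 1) * Xv)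
            + (tm : B) * ((qk : B) ^ (2 * ℓ + 1) *
                ((qk : B) ^ (2 * (m - 1 - ℓ) + 1) * (Qiv * U))) := by
            rw [mul_add, mul_add]
        _ = (tm : B) * (qk : B) ^ (2 * ℓ + 1) * Xv
            + (tm : B) * ((qk : B) ^ (2 * m) * Qiv * U) := by
            rw [← mul_assoc ((qk : B) ^ (2 * ℓ + 1)), ← pow_add, hee, ← mul_assoc (tm : B),
              mul_assoc ((qk : B) ^ (2 * m))]
        _ = (tp : B) + (tm : B) * (qk : B) ^ (2 * ℓ + 1) * Xv := by
            rw [hq2mQi, one_mul, htmU, add_comm]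
    have hfx : ∀ i j : ℕ, Commute (1 + (qk : B) ^ i * x) (1 + (qk : B) ^ j * x) := by
      intro i j
      have hab : Commute ((qk : B) ^ i * x) ((qk : B) ^ j * x) :=
        Commute.mul_right (((hqk _).pow_left _).symm)
          (Commute.mul_left ((hqk x).pow_left _) (Commute.refl x))
      exact Commute.add_left (Commute.one_left _)
        (Commute.add_right (Commute.one_right _) hab)
    have hPval : (P : B) = (tm : B) ^ m * ((qk : B) ^ (m * m) * (Xv ^ m * F)) := by
      rw [hP']
      have e0 : ((List.range m).map (fun ℓ =>
          (tp : B) + (tm : B) * (qk : B) ^ (2 * ℓ + 1) * Xv)).prod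
          = ((List.range m).map (fun ℓ => (tm : B) * ((qk : B) ^ (2 * ℓ + 1) *
              (Xv * (1 + (qk : B) ^ (2 * (m - 1 - ℓ) + 1) * x))))).prod := by
        congr 1
        refine List.map_congr_left ?_
        intro ℓ hℓ
        exact hplf ℓ (List.mem_range.mp hℓ)
      rw [e0]
      have e1 := list_prod_range_mul (fun _ => (tm : B))
        (fun ℓ => (qk : B) ^ (2 * ℓ + 1) *
          (Xv * (1 + (qk : B) ^ (2 * (m - 1 - ℓ) + 1) * x)))
        (fun i j => (htm _).symm) m
      rw [e1, list_prod_range_const]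
      have e2 := list_prod_range_mul (fun ℓ => (qk : B) ^ (2 * ℓ + 1))
        (fun ℓ => Xv * (1 + (qk : B) ^ (2 * (m - 1 - ℓ) + 1) * x))
        (fun i j => ((hqk _).pow_left _).symm) m
      rw [e2, list_prod_range_qpow]
      have hcfXv : ∀ i : ℕ, Commute (1 + (qk : B) ^ i * x) Xv := by
        intro i
        refine Commute.add_left (Commute.one_left _) ?_
        refine Commute.mul_left ((hqk Xv).pow_left _) ?_
        exact Commute.mul_left (hQi Xv) ((hXky.symm).units_inv_right)
      have e3 := list_prod_range_mul (fun _ => Xv)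
        (fun ℓ => 1 + (qk : B) ^ (2 * (m - 1 - ℓ) + 1) * x)
        (fun i j => hcfXv _) m
      rw [e3, list_prod_range_const]
      have e4 : ((List.range m).map (fun ℓ =>
          1 + (qk : B) ^ (2 * (m - 1 - ℓ) + 1) * x)).prod = F := by
        rw [hFdef]
        exact list_prod_range_rev (fun j => 1 + (qk : B) ^ (2 * j + 1) * x)
          (fun i j => hfx _ _) m
      rw [e4]
    -- final assembly
    have hTmvc : ∀ b : B, Commute ((((tm ^ m)⁻¹ : Bˣ)) : B) b := by
      intro b
      have h1 : Commute ((tm ^ m : Bˣ) : B) b := by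
        rw [Units.val_pow_eq_pow_val]; exact (htm b).pow_left m
      exact h1.units_inv_left
    have hQcvc : ∀ b : B, Commute ((((qk ^ (m * m))⁻¹ : Bˣ)) : B) b := by
      intro b
      have h1 : Commute ((qk ^ (m * m) : Bˣ) : B) b := by
        rw [Units.val_pow_eq_pow_val]; exact (hqk b).pow_left _
      exact h1.units_inv_left
    have hTm1 : ((((tm ^ m)⁻¹ : Bˣ)) : B) * (tm : B) ^ m = 1 := by
      rw [← Units.val_pow_eq_pow_val, Units.inv_mul]
    have hQc1 : ((((qk ^ (m * m))⁻¹ : Bˣ)) : B) * (qk : B) ^ (m * m) = 1 := by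
      rw [← Units.val_pow_eq_pow_val, Units.inv_mul]
    have hXkXvm : ((Xk ^ m : Bˣ) : B) * Xv ^ m = 1 := by
      rw [hXvdef, ← Units.val_pow_eq_pow_val, inv_pow, Units.mul_inv]
    have hKP : ((Xk ^ m : Bˣ) : B) * (P : B)
        = (tm : B) ^ m * ((qk : B) ^ (m * m) * F) := by
      rw [hPval, ctml, cql, ← mul_assoc ((Xk ^ m : Bˣ) : B), hXkXvm, one_mul]
    have key' : (Ψ : B) * (((((tm ^ m)⁻¹ : Bˣ)) : B) *
        (((((qk ^ (m * m))⁻¹ : Bˣ)) : B) * (Xi * ((Xk ^ m : Bˣ) : B)))) * (P : B)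
        = Xi * (Ψ : B) := by
      simp only [mul_assoc]
      rw [hKP, ctml, ctml, ← mul_assoc ((((tm ^ m)⁻¹ : Bˣ)) : B), hTm1, one_mul,
        cql, ← mul_assoc ((((qk ^ (m * m))⁻¹ : Bˣ)) : B), hQc1, one_mul, ← lemC,
        ← mul_assoc, ← hΨG.eq, mul_assoc, ← lemB]
    have key : (Ψ : B) * (((((tm ^ m)⁻¹ : Bˣ)) : B) *
        (((((qk ^ (m * m))⁻¹ : Bˣ)) : B) * (Xi * ((Xk ^ m : Bˣ) : B))))
        = Xi * (Ψ : B) * ((P⁻¹ : Bˣ) : B) := by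
      have h2 := congrArg (fun z : B => z * ((P⁻¹ : Bˣ) : B)) key'
      simpa only [Units.mul_inv_cancel_right] using h2
    rw [mul_assoc ((((tm ^ m)⁻¹ : Bˣ)) : B), key]
    have hinv : Commute ((P⁻¹ : Bˣ) : B) ((Ψ⁻¹ : Bˣ) : B) :=
      (hΨP.units_inv_left).units_inv_right
    rw [mul_assoc (Xi * (Ψ : B)), hinv.eq, ← mul_assoc, Units.mul_inv_cancel_right]
end

section
/- The classical X-mutation with coefficients preserves the Poisson bracket {X^{v₁}, X^{v₂}}_𝒢 = 2{v₁,v₂}X^{v₁+v₂}: for all i, j, {μ*(X̃_{i;𝒢'}), μ*(X̃_{j;𝒢'})}_𝒢 = μ*({X̃_{i;𝒢'}, X̃_{j;𝒢'}}_{𝒢'}), where μ*(X̃_{k;𝒢'}) = X̃_{k;𝒢}^{−1} and μ*(X̃_{i;𝒢'}) = X̃_{i;𝒢}(t^{[sgn(ε_{ik})c_k]_+} + t^{[−sgn(ε_{ik})c_k]_+} X̃_{k;𝒢}^{−sgn(ε_{ik})})^{−ε_{ik}} for i ≠ k. -/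
open scoped BigOperators

set_option linter.unusedSectionVars false

section PoissonAux

variable {A : Type*} [CommRing A] [Algebra ℚ A]
    (P : A → A → A)
    (haddl : ∀ f g h : A, P (f + g) h = P f h + P g h)
    (haddr : ∀ f g h : A, P f (g + h) = P f g + P f h)
    (hsmul : ∀ (c : ℚ) (f g : A), P (c • f) g = c • P f g)
    (hanti : ∀ f g : A, P f g = - P g f)
    (hleib : ∀ f g h : A, P f (g * h) = g * P f h + h * P f g)

include hleib in
theorem pbr_one : ∀ f : A, P f 1 = 0 := by
  intro f
  have h := hleib f 1 1
  simp only [one_mul, mul_one] at h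
  linear_combination -h

include hanti hleib in
theorem pbr_mull : ∀ f g h : A, P (f * g) h = f * P g h + g * P f h := by
  intro f g h
  rw [hanti (f*g) h, hleib, hanti h g, hanti h f]; ring

include hsmul hanti in
theorem pbr_self : ∀ f : A, P f f = 0 := by
  intro f
  have h2 : P f f + P f f = 0 := by linear_combination hanti f f
  calc P f f = (2:ℚ)⁻¹ • ((2:ℚ) • P f f) := by rw [smul_smul]; norm_num
    _ = 0 := by rw [two_smul, h2, smul_zero]

include hanti hleib in
theorem pbr_inv : ∀ (u : Aˣ) (f : A), P f ↑u⁻¹ = -(↑u⁻¹ * ↑u⁻¹ * P f ↑u) := by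
  intro u f
  have h0 : (u:A) * P f ↑u⁻¹ + ↑u⁻¹ * P f ↑u = 0 := by
    rw [← hleib]; rw [Units.mul_inv]; exact pbr_one P hleib f
  have hui : (↑u⁻¹ : A) * ↑u = 1 := Units.inv_mul u
  linear_combination (↑u⁻¹:A) * h0 - (P f ↑u⁻¹) * hui

include haddr hsmul hanti hleib in
theorem pbr_zpow : ∀ (u : Aˣ) (f : A) (m : ℤ),
    (u:A) * P f ↑(u ^ m) = (m : ℚ) • (↑(u ^ m) * P f ↑u) := by
  intro u f m
  induction m using Int.induction_on with
  | zero => simp [pbr_one P hleib]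
  | succ m ih =>
      have he : (↑(u ^ ((m:ℤ)+1)) : A) = ↑(u ^ (m:ℤ)) * ↑u := by
        rw [zpow_add_one]; rfl
      rw [he, hleib]
      rw [Algebra.smul_def] at ih ⊢
      simp only [Int.cast_add, Int.cast_one, Int.cast_natCast, map_add, map_one,
        map_intCast, map_natCast] at ih ⊢
      linear_combination (↑u:A) * ih
  | pred m ih =>
      have he : (↑(u ^ (-(m:ℤ)-1)) : A) = ↑(u ^ (-(m:ℤ))) * ↑u⁻¹ := by
        rw [zpow_sub_one]; rfl
      rw [he, hleib, pbr_inv P hanti hleib]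
      rw [Algebra.smul_def] at ih ⊢
      simp only [Int.cast_sub, Int.cast_neg, Int.cast_one, Int.cast_natCast, map_sub,
        map_neg, map_one, map_intCast, map_natCast] at ih ⊢
      have h1 : (↑u⁻¹:A) * ↑u = 1 := Units.inv_mul u
      linear_combination (↑u⁻¹:A) * ih
        + (-(↑(u ^ (-(m:ℤ))):A) * ↑u⁻¹ * P f ↑u) * h1

include hanti hleib in
theorem pbr_key (x y Ux Uy ux uy wx wy cx cy b S2 : A)
    (hx : ux * P y Ux = cx * (Ux * (y * wx)))
    (hy : uy * P x Uy = cy * (Uy * (x * wy)))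
    (hxy : P x y = b * (x * y))
    (hUU : P Ux Uy = 0)
    (hS : -(cx * (uy * wx)) + cy * (ux * wy) + b * (ux * uy) = S2 * (ux * uy)) :
    ux * uy * P (x * Ux) (y * Uy) = ux * uy * (S2 * ((x * Ux) * (y * Uy))) := by
  have e1 : P (x*Ux) (y*Uy)
      = y * (x * P Ux Uy + Ux * P x Uy) + Uy * (x * (-(P y Ux)) + Ux * P x y) := by
    rw [hleib, pbr_mull P hanti hleib, pbr_mull P hanti hleib, hanti Ux y]
  linear_combination (ux*uy) * e1 + (y*Ux*ux) * hy - (Uy*x*uy) * hx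
    + (Ux*Uy*ux*uy) * hxy + (x*y*ux*uy) * hUU + (x*y*Ux*Uy) * hS

end PoissonAux

theorem sum_eval {n : ℕ} (Bm : Fin n → Fin n → ℚ) (x y k : Fin n) (r s p q : ℚ) :
    (∑ a, ∑ c, ((if a = x then r else 0) + (if a = k then p else 0)) *
      ((if c = y then s else 0) + (if c = k then q else 0)) * Bm a c)
    = r*s*Bm x y + r*q*Bm x k + p*s*Bm k y + p*q*Bm k k := by
  simp only [add_mul, mul_add, ite_mul, zero_mul, mul_ite, mul_zero,
    Finset.sum_add_distrib, Finset.sum_ite_eq', Finset.mem_univ, if_true]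
  ring

/-- Coordinates of the mutated basis vectors: `e_{k;𝒢'} = −e_{k;𝒢}` and
`e_{i;𝒢'} = e_{i;𝒢} + [ε_{ik}]_+ e_{k;𝒢}` for `i ≠ k`. -/
def mutatedBasisCoords (n : ℕ) (k : Fin n) (ε : Fin n → ℤ) : Fin n → Fin n → ℚ :=
  fun i a =>
    if i = k then (if a = k then -1 else 0)
    else (if a = i then (1 : ℚ) else 0) + (if a = k then ((max (ε i) 0 : ℤ) : ℚ) else 0)

/-- The classical `𝒳`-mutation with coefficients preserves the Poisson bracket
`{X^{v₁}, X^{v₂}}_𝒢 = 2{v₁,v₂}X^{v₁+v₂}`: for all `i, j`,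
`{μ*(X̃_{i;𝒢'}), μ*(X̃_{j;𝒢'})}_𝒢 = μ*({X̃_{i;𝒢'}, X̃_{j;𝒢'}}_{𝒢'})`, where
`μ*(X̃_{k;𝒢'}) = X̃_{k;𝒢}^{−1}` and
`μ*(X̃_{i;𝒢'}) = X̃_{i;𝒢}(𝐭^{[sgn(ε_{ik})c_k]_+} + 𝐭^{[−sgn(ε_{ik})c_k]_+}
X̃_{k;𝒢}^{−sgn(ε_{ik})})^{−ε_{ik}}` for `i ≠ k`.  Here `P` is the Poisson bracket of the chart
`𝒢`, satisfying `{X̃_i, X̃_j} = 2{e_i,e_j} X̃_i X̃_j` with `{e_i,e_j} = Bm i j`, the coefficients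
`tp = 𝐭^{[c_k]_+}`, `tm = 𝐭^{[−c_k]_+}` are Casimirs, `ε_{ik} = {e_i,e_k}d_k`, and the bracket
`{·,·}_{𝒢'}` is computed from the mutated basis `e_{i;𝒢'}`. -/
theorem classical_mutation_preserves_poisson {A : Type*} [CommRing A] [Algebra ℚ A]
    (P : A → A → A)
    (haddl : ∀ f g h : A, P (f + g) h = P f h + P g h)
    (haddr : ∀ f g h : A, P f (g + h) = P f g + P f h)
    (hsmul : ∀ (c : ℚ) (f g : A), P (c • f) g = c • P f g)
    (hanti : ∀ f g : A, P f g = - P g f)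
    (hleib : ∀ f g h : A, P f (g * h) = g * P f h + h * P f g)
    (n : ℕ) (Bm : Fin n → Fin n → ℚ) (hskew : ∀ i j, Bm i j = - Bm j i)
    (X : Fin n → Aˣ)
    (hbr : ∀ i j, P ((X i : A)) ((X j : A)) = (2 * Bm i j) • ((X i : A) * (X j : A)))
    (tp tm : A) (htp : ∀ a : A, P tp a = 0) (htm : ∀ a : A, P tm a = 0)
    (k : Fin n) (dk : ℚ) (ε : Fin n → ℤ) (hε : ∀ i, (ε i : ℚ) = Bm i k * dk)
    (bu : Fin n → Aˣ)
    (hbu : ∀ i, (bu i : A) =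
      if 0 ≤ ε i then tp + tm * (((X k)⁻¹ : Aˣ) : A) else tm + tp * (X k : A)) :
    ∀ i j,
      P (if i = k then (((X k)⁻¹ : Aˣ) : A) else (X i : A) * ((bu i ^ (-(ε i)) : Aˣ) : A))
        (if j = k then (((X k)⁻¹ : Aˣ) : A) else (X j : A) * ((bu j ^ (-(ε j)) : Aˣ) : A)) =
      (2 * ∑ a, ∑ c, mutatedBasisCoords n k ε i a * mutatedBasisCoords n k ε j c * Bm a c) •
        ((if i = k then (((X k)⁻¹ : Aˣ) : A)
            else (X i : A) * ((bu i ^ (-(ε i)) : Aˣ) : A)) *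
          (if j = k then (((X k)⁻¹ : Aˣ) : A)
            else (X j : A) * ((bu j ^ (-(ε j)) : Aˣ) : A))) := by
  intro i j
  have hone := pbr_one P hleib
  have hmull := pbr_mull P hanti hleib
  have hself := pbr_self P hsmul hanti
  have hinv := pbr_inv P hanti hleib
  have hzpow := pbr_zpow P haddr hsmul hanti hleib
  set K : A := (X k : A) with hK
  set Ki : A := (((X k)⁻¹ : Aˣ) : A) with hKidef
  have hKKi : K * Ki = 1 := Units.mul_inv (X k)
  have hPa_tp : ∀ a : A, P a tp = 0 := fun a => by rw [hanti, htp, neg_zero]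
  have hPa_tm : ∀ a : A, P a tm = 0 := fun a => by rw [hanti, htm, neg_zero]
  have hPKKi : P K Ki = 0 := by rw [hinv, hself]; ring
  have hPKiK : P Ki K = 0 := by rw [hanti, hPKKi, neg_zero]
  have hkk : Bm k k = 0 := by have := hskew k k; linarith
  have hPXKi : ∀ a, P (X a : A) Ki = (-(2 * Bm a k)) • ((X a : A) * Ki) := by
    intro a
    rw [hinv, hbr]
    rw [Algebra.smul_def, Algebra.smul_def, map_neg]
    linear_combination (-(algebraMap ℚ A (2 * Bm a k)) * (X a : A) * Ki) * hKKi
  have hPXbu : ∀ a b, P (X a : A) ((bu b : A)) =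
      if 0 ≤ ε b then (-(2 * Bm a k)) • ((X a : A) * (tm * Ki))
      else (2 * Bm a k) • ((X a : A) * (tp * K)) := by
    intro a b
    rw [hbu b]
    split
    · rw [haddr, hleib, hPa_tp, hPa_tm, hPXKi, Algebra.smul_def, Algebra.smul_def]
      ring
    · rw [haddr, hleib, hPa_tm, hPa_tp, hbr, Algebra.smul_def, Algebra.smul_def]
      ring
  have hPKibu : ∀ b, P Ki ((bu b : A)) = 0 := by
    intro b
    rw [hbu b]
    split <;>
      simp [haddr, hleib, hPa_tp, hPa_tm, hself, hPKiK]
  have hPKiU : ∀ b, P Ki (((bu b ^ (-(ε b)) : Aˣ)) : A) = 0 := by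
    intro b
    have h := hzpow (bu b) Ki (-(ε b))
    rw [hPKibu b] at h
    simp only [mul_zero, smul_zero] at h
    exact (Units.mul_right_eq_zero (bu b)).mp h
  have hPbubu : ∀ a b, P ((bu a : A)) ((bu b : A)) = 0 := by
    intro a b
    rw [hbu a, hbu b]
    split <;> split <;>
      simp [haddl, haddr, hleib, hmull, htp, htm, hPa_tp, hPa_tm, hself, hPKiK, hPKKi]
  have hPbuU : ∀ a b, P ((bu a : A)) (((bu b ^ (-(ε b)) : Aˣ)) : A) = 0 := by
    intro a b
    have h := hzpow (bu b) ((bu a : A)) (-(ε b))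
    rw [hPbubu a b] at h
    simp only [mul_zero, smul_zero] at h
    exact (Units.mul_right_eq_zero (bu b)).mp h
  have hUU : ∀ a b, P (((bu a ^ (-(ε a)) : Aˣ)) : A) (((bu b ^ (-(ε b)) : Aˣ)) : A) = 0 := by
    intro a b
    have h2 : P (((bu a ^ (-(ε a)) : Aˣ)) : A) ((bu b : A)) = 0 := by
      rw [hanti, hPbuU b a, neg_zero]
    have h := hzpow (bu b) (((bu a ^ (-(ε a)) : Aˣ)) : A) (-(ε b))
    rw [h2] at h
    simp only [mul_zero, smul_zero] at h
    exact (Units.mul_right_eq_zero (bu b)).mp h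
  have hrelQ : ∀ a b : Fin n, ((ε a : ℚ)) * Bm b k = ((ε b : ℚ)) * Bm a k := by
    intro a b
    linear_combination Bm b k * hε a - Bm a k * hε b
  have hcancel : ∀ (u v : Aˣ) (a b : A), (↑u:A) * ↑v * a = (↑u:A) * ↑v * b → a = b := by
    intro u v a b h
    have h2 : (↑u:A) * (↑v * a) = (↑u:A) * (↑v * b) := by
      rw [← mul_assoc, ← mul_assoc]; exact h
    exact (Units.mul_right_inj v).mp ((Units.mul_right_inj u).mp h2)
  by_cases hik : i = k
  · rw [if_pos hik]
    have hck : ∀ a, mutatedBasisCoords n k ε i a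
        = (if a = k then (-1:ℚ) else 0) + (if a = k then (0:ℚ) else 0) := by
      intro a; simp [mutatedBasisCoords, hik]
    by_cases hjk : j = k
    · rw [if_pos hjk]
      have hcj : ∀ a, mutatedBasisCoords n k ε j a
          = (if a = k then (-1:ℚ) else 0) + (if a = k then (0:ℚ) else 0) := by
        intro a; simp [mutatedBasisCoords, hjk]
      have hsum0 : (∑ a, ∑ c,
          mutatedBasisCoords n k ε i a * mutatedBasisCoords n k ε j c * Bm a c) = 0 := by
        simp only [hck, hcj]
        rw [sum_eval, hkk]
        ring
      rw [hsum0]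
      simp [hself]
    · rw [if_neg hjk]
      have hcj : ∀ a, mutatedBasisCoords n k ε j a
          = (if a = j then (1:ℚ) else 0)
            + (if a = k then ((max (ε j) 0 : ℤ) : ℚ) else 0) := by
        intro a; simp [mutatedBasisCoords, hjk]
      simp only [hck, hcj]
      rw [sum_eval, hkk, hskew k j]
      rw [hleib, hPKiU j]
      have hPKiX : P Ki ((X j : A)) = -((-(2 * Bm j k)) • ((X j : A) * Ki)) := by
        rw [hanti, hPXKi]
      rw [hPKiX, Algebra.smul_def, Algebra.smul_def]
      simp only [map_neg, map_mul, map_ofNat, map_add, map_zero, map_one]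
      ring
  · rw [if_neg hik]
    have hci : ∀ a, mutatedBasisCoords n k ε i a
        = (if a = i then (1:ℚ) else 0)
          + (if a = k then ((max (ε i) 0 : ℤ) : ℚ) else 0) := by
      intro a; simp [mutatedBasisCoords, hik]
    by_cases hjk : j = k
    · rw [if_pos hjk]
      have hcj : ∀ a, mutatedBasisCoords n k ε j a
          = (if a = k then (-1:ℚ) else 0) + (if a = k then (0:ℚ) else 0) := by
        intro a; simp [mutatedBasisCoords, hjk]
      simp only [hci, hcj]
      rw [sum_eval, hkk]
      rw [hanti, hleib, hPKiU i]
      have hPKiX : P Ki ((X i : A)) = -((-(2 * Bm i k)) • ((X i : A) * Ki)) := by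
        rw [hanti, hPXKi]
      rw [hPKiX, Algebra.smul_def, Algebra.smul_def]
      simp only [map_neg, map_mul, map_ofNat, map_add, map_zero, map_one]
      ring
    · rw [if_neg hjk]
      have hcj : ∀ a, mutatedBasisCoords n k ε j a
          = (if a = j then (1:ℚ) else 0)
            + (if a = k then ((max (ε j) 0 : ℤ) : ℚ) else 0) := by
        intro a; simp [mutatedBasisCoords, hjk]
      simp only [hci, hcj]
      rw [sum_eval, hkk, hskew k j]
      have hrelA : ((ε j : ℤ):A) * algebraMap ℚ A (Bm i k)
          = ((ε i : ℤ):A) * algebraMap ℚ A (Bm j k) := by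
        have h := congrArg (algebraMap ℚ A) (hrelQ j i)
        simpa only [map_mul, map_intCast] using h
      have hxy : P ((X i:A)) ((X j:A))
          = 2 * algebraMap ℚ A (Bm i j) * ((X i:A) * (X j:A)) := by
        rw [hbr, Algebra.smul_def, map_mul, map_ofNat]
      by_cases hsi : 0 ≤ ε i <;> by_cases hsj : 0 ≤ ε j
      · -- ++
        rw [max_eq_left hsi, max_eq_left hsj]
        have hui : ((bu i : A)) = tp + tm * Ki := by rw [hbu i, if_pos hsi]
        have huj : ((bu j : A)) = tp + tm * Ki := by rw [hbu j, if_pos hsj]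
        have hx : ((bu i : A)) * P ((X j:A)) ((bu i ^ (-(ε i)) : Aˣ) : A)
            = 2 * ((ε i : ℤ):A) * algebraMap ℚ A (Bm j k)
              * (((bu i ^ (-(ε i)) : Aˣ) : A) * ((X j:A) * (tm * Ki))) := by
          have h := hzpow (bu i) ((X j:A)) (-(ε i))
          rw [hPXbu j i, if_pos hsi] at h
          simp only [Algebra.smul_def, map_neg, map_mul, map_ofNat, map_intCast,
            Int.cast_neg] at h
          linear_combination h
        have hy : ((bu j : A)) * P ((X i:A)) ((bu j ^ (-(ε j)) : Aˣ) : A)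
            = 2 * ((ε j : ℤ):A) * algebraMap ℚ A (Bm i k)
              * (((bu j ^ (-(ε j)) : Aˣ) : A) * ((X i:A) * (tm * Ki))) := by
          have h := hzpow (bu j) ((X i:A)) (-(ε j))
          rw [hPXbu i j, if_pos hsj] at h
          simp only [Algebra.smul_def, map_neg, map_mul, map_ofNat, map_intCast,
            Int.cast_neg] at h
          linear_combination h
        have hS : -((2 * ((ε i : ℤ):A) * algebraMap ℚ A (Bm j k)) * (((bu j : A)) * (tm * Ki)))
            + (2 * ((ε j : ℤ):A) * algebraMap ℚ A (Bm i k)) * (((bu i : A)) * (tm * Ki))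
            + (2 * algebraMap ℚ A (Bm i j)) * (((bu i : A)) * ((bu j : A)))
            = (2 * algebraMap ℚ A (Bm i j) + 2 * ((ε j : ℤ):A) * algebraMap ℚ A (Bm i k)
                - 2 * ((ε i : ℤ):A) * algebraMap ℚ A (Bm j k))
              * (((bu i : A)) * ((bu j : A))) := by
          rw [hui, huj]
          linear_combination (2*(tp+tm*Ki)*(tm*Ki) - 2*(tp+tm*Ki)*(tp+tm*Ki)) * hrelA
        have key := pbr_key P hanti hleib ((X i:A)) ((X j:A))
          (((bu i ^ (-(ε i)) : Aˣ) : A)) (((bu j ^ (-(ε j)) : Aˣ) : A))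
          ((bu i : A)) ((bu j : A)) (tm * Ki) (tm * Ki)
          (2 * ((ε i : ℤ):A) * algebraMap ℚ A (Bm j k))
          (2 * ((ε j : ℤ):A) * algebraMap ℚ A (Bm i k))
          (2 * algebraMap ℚ A (Bm i j))
          (2 * algebraMap ℚ A (Bm i j) + 2 * ((ε j : ℤ):A) * algebraMap ℚ A (Bm i k)
            - 2 * ((ε i : ℤ):A) * algebraMap ℚ A (Bm j k))
          hx hy hxy (hUU i j) hS
        rw [Algebra.smul_def]
        simp only [map_mul, map_add, map_neg, map_sub, map_ofNat, map_intCast, map_zero,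
          map_one, Int.cast_neg]
        apply hcancel (bu i) (bu j)
        linear_combination key
      · -- +-
        rw [max_eq_left hsi, max_eq_right (le_of_lt (not_le.mp hsj))]
        have hui : ((bu i : A)) = tp + tm * Ki := by rw [hbu i, if_pos hsi]
        have huj : ((bu j : A)) = tm + tp * K := by rw [hbu j, if_neg hsj]
        have hx : ((bu i : A)) * P ((X j:A)) ((bu i ^ (-(ε i)) : Aˣ) : A)
            = 2 * ((ε i : ℤ):A) * algebraMap ℚ A (Bm j k)
              * (((bu i ^ (-(ε i)) : Aˣ) : A) * ((X j:A) * (tm * Ki))) := by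
          have h := hzpow (bu i) ((X j:A)) (-(ε i))
          rw [hPXbu j i, if_pos hsi] at h
          simp only [Algebra.smul_def, map_neg, map_mul, map_ofNat, map_intCast,
            Int.cast_neg] at h
          linear_combination h
        have hy : ((bu j : A)) * P ((X i:A)) ((bu j ^ (-(ε j)) : Aˣ) : A)
            = -(2 * ((ε j : ℤ):A) * algebraMap ℚ A (Bm i k))
              * (((bu j ^ (-(ε j)) : Aˣ) : A) * ((X i:A) * (tp * K))) := by
          have h := hzpow (bu j) ((X i:A)) (-(ε j))
          rw [hPXbu i j, if_neg hsj] at h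
          simp only [Algebra.smul_def, map_neg, map_mul, map_ofNat, map_intCast,
            Int.cast_neg] at h
          linear_combination h
        have hS : -((2 * ((ε i : ℤ):A) * algebraMap ℚ A (Bm j k)) * (((bu j : A)) * (tm * Ki)))
            + (-(2 * ((ε j : ℤ):A) * algebraMap ℚ A (Bm i k))) * (((bu i : A)) * (tp * K))
            + (2 * algebraMap ℚ A (Bm i j)) * (((bu i : A)) * ((bu j : A)))
            = (2 * algebraMap ℚ A (Bm i j)
                - 2 * ((ε i : ℤ):A) * algebraMap ℚ A (Bm j k))
              * (((bu i : A)) * ((bu j : A))) := by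
          rw [hui, huj]
          linear_combination (-(2:A)*(tp+tm*Ki)*(tp*K)) * hrelA
            + (-(2*((ε i : ℤ):A)*algebraMap ℚ A (Bm j k))*(tp*tm)) * hKKi
        have key := pbr_key P hanti hleib ((X i:A)) ((X j:A))
          (((bu i ^ (-(ε i)) : Aˣ) : A)) (((bu j ^ (-(ε j)) : Aˣ) : A))
          ((bu i : A)) ((bu j : A)) (tm * Ki) (tp * K)
          (2 * ((ε i : ℤ):A) * algebraMap ℚ A (Bm j k))
          (-(2 * ((ε j : ℤ):A) * algebraMap ℚ A (Bm i k)))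
          (2 * algebraMap ℚ A (Bm i j))
          (2 * algebraMap ℚ A (Bm i j) - 2 * ((ε i : ℤ):A) * algebraMap ℚ A (Bm j k))
          hx hy hxy (hUU i j) hS
        rw [Algebra.smul_def]
        simp only [map_mul, map_add, map_neg, map_sub, map_ofNat, map_intCast, map_zero,
          map_one, Int.cast_neg]
        apply hcancel (bu i) (bu j)
        linear_combination key
      · -- -+
        rw [max_eq_right (le_of_lt (not_le.mp hsi)), max_eq_left hsj]
        have hui : ((bu i : A)) = tm + tp * K := by rw [hbu i, if_neg hsi]
        have huj : ((bu j : A)) = tp + tm * Ki := by rw [hbu j, if_pos hsj]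
        have hx : ((bu i : A)) * P ((X j:A)) ((bu i ^ (-(ε i)) : Aˣ) : A)
            = -(2 * ((ε i : ℤ):A) * algebraMap ℚ A (Bm j k))
              * (((bu i ^ (-(ε i)) : Aˣ) : A) * ((X j:A) * (tp * K))) := by
          have h := hzpow (bu i) ((X j:A)) (-(ε i))
          rw [hPXbu j i, if_neg hsi] at h
          simp only [Algebra.smul_def, map_neg, map_mul, map_ofNat, map_intCast,
            Int.cast_neg] at h
          linear_combination h
        have hy : ((bu j : A)) * P ((X i:A)) ((bu j ^ (-(ε j)) : Aˣ) : A)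
            = 2 * ((ε j : ℤ):A) * algebraMap ℚ A (Bm i k)
              * (((bu j ^ (-(ε j)) : Aˣ) : A) * ((X i:A) * (tm * Ki))) := by
          have h := hzpow (bu j) ((X i:A)) (-(ε j))
          rw [hPXbu i j, if_pos hsj] at h
          simp only [Algebra.smul_def, map_neg, map_mul, map_ofNat, map_intCast,
            Int.cast_neg] at h
          linear_combination h
        have hS : -((-(2 * ((ε i : ℤ):A) * algebraMap ℚ A (Bm j k))) * (((bu j : A)) * (tp * K)))
            + (2 * ((ε j : ℤ):A) * algebraMap ℚ A (Bm i k)) * (((bu i : A)) * (tm * Ki))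
            + (2 * algebraMap ℚ A (Bm i j)) * (((bu i : A)) * ((bu j : A)))
            = (2 * algebraMap ℚ A (Bm i j)
                + 2 * ((ε j : ℤ):A) * algebraMap ℚ A (Bm i k))
              * (((bu i : A)) * ((bu j : A))) := by
          rw [hui, huj]
          linear_combination (-(2:A)*(tp+tm*Ki)*(tp*K)) * hrelA
            + ((2*((ε j : ℤ):A)*algebraMap ℚ A (Bm i k))*(tp*tm)) * hKKi
        have key := pbr_key P hanti hleib ((X i:A)) ((X j:A))
          (((bu i ^ (-(ε i)) : Aˣ) : A)) (((bu j ^ (-(ε j)) : Aˣ) : A))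
          ((bu i : A)) ((bu j : A)) (tp * K) (tm * Ki)
          (-(2 * ((ε i : ℤ):A) * algebraMap ℚ A (Bm j k)))
          (2 * ((ε j : ℤ):A) * algebraMap ℚ A (Bm i k))
          (2 * algebraMap ℚ A (Bm i j))
          (2 * algebraMap ℚ A (Bm i j) + 2 * ((ε j : ℤ):A) * algebraMap ℚ A (Bm i k))
          hx hy hxy (hUU i j) hS
        rw [Algebra.smul_def]
        simp only [map_mul, map_add, map_neg, map_sub, map_ofNat, map_intCast, map_zero,
          map_one, Int.cast_neg]
        apply hcancel (bu i) (bu j)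
        linear_combination key
      · -- --
        rw [max_eq_right (le_of_lt (not_le.mp hsi)), max_eq_right (le_of_lt (not_le.mp hsj))]
        have hui : ((bu i : A)) = tm + tp * K := by rw [hbu i, if_neg hsi]
        have huj : ((bu j : A)) = tm + tp * K := by rw [hbu j, if_neg hsj]
        have hx : ((bu i : A)) * P ((X j:A)) ((bu i ^ (-(ε i)) : Aˣ) : A)
            = -(2 * ((ε i : ℤ):A) * algebraMap ℚ A (Bm j k))
              * (((bu i ^ (-(ε i)) : Aˣ) : A) * ((X j:A) * (tp * K))) := by
          have h := hzpow (bu i) ((X j:A)) (-(ε i))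
          rw [hPXbu j i, if_neg hsi] at h
          simp only [Algebra.smul_def, map_neg, map_mul, map_ofNat, map_intCast,
            Int.cast_neg] at h
          linear_combination h
        have hy : ((bu j : A)) * P ((X i:A)) ((bu j ^ (-(ε j)) : Aˣ) : A)
            = -(2 * ((ε j : ℤ):A) * algebraMap ℚ A (Bm i k))
              * (((bu j ^ (-(ε j)) : Aˣ) : A) * ((X i:A) * (tp * K))) := by
          have h := hzpow (bu j) ((X i:A)) (-(ε j))
          rw [hPXbu i j, if_neg hsj] at h
          simp only [Algebra.smul_def, map_neg, map_mul, map_ofNat, map_intCast,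
            Int.cast_neg] at h
          linear_combination h
        have hS : -((-(2 * ((ε i : ℤ):A) * algebraMap ℚ A (Bm j k))) * (((bu j : A)) * (tp * K)))
            + (-(2 * ((ε j : ℤ):A) * algebraMap ℚ A (Bm i k))) * (((bu i : A)) * (tp * K))
            + (2 * algebraMap ℚ A (Bm i j)) * (((bu i : A)) * ((bu j : A)))
            = (2 * algebraMap ℚ A (Bm i j)) * (((bu i : A)) * ((bu j : A))) := by
          rw [hui, huj]
          linear_combination (-(2:A)*(tm+tp*K)*(tp*K)) * hrelA
        have key := pbr_key P hanti hleib ((X i:A)) ((X j:A))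
          (((bu i ^ (-(ε i)) : Aˣ) : A)) (((bu j ^ (-(ε j)) : Aˣ) : A))
          ((bu i : A)) ((bu j : A)) (tp * K) (tp * K)
          (-(2 * ((ε i : ℤ):A) * algebraMap ℚ A (Bm j k)))
          (-(2 * ((ε j : ℤ):A) * algebraMap ℚ A (Bm i k)))
          (2 * algebraMap ℚ A (Bm i j))
          (2 * algebraMap ℚ A (Bm i j))
          hx hy hxy (hUU i j) hS
        rw [Algebra.smul_def]
        simp only [map_mul, map_add, map_neg, map_sub, map_ofNat, map_intCast, map_zero,
          map_one, Int.cast_neg]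
        apply hcancel (bu i) (bu j)
        linear_combination key
end
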